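/- arXiv:2510.09246 — 4 statements merged into one kernel-verified Lean document; each statement's English description precedes it below -/
import Mathlib

section
/- Let w₁ ≠ 0. Then for l_pred = (t_pred, l')ᵀ ∈ ℒ the following are equivalent: (i) there exists p₀ ∈ 𝒫 with d(l_pred, p₀) = d(ℒ, 𝒫) = min_{l∈ℒ, p∈𝒫} d(l,p); (ii) t_pred = −(1/‖w₁‖²)·w₁ᵀ W' l'. Moreover, in that case d(l_pred, p₀) = d(ℒ, 𝒫) holds exactly for p₀ = proj_𝒫(l_pred). -/
open Matrix

/-- Distance between two subsets of a metric space: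
`d(𝒜,ℬ) = inf {dist a b | a ∈ 𝒜, b ∈ ℬ}`. -/
noncomputable def setDist {X : Type*} [MetricSpace X] (A B : Set X) : ℝ :=
  sInf (Set.image2 dist A B)


lemma gram_inv {m n : ℕ} (P : Matrix (Fin m) (Fin n) ℝ)
    (hP : LinearIndependent ℝ (fun j : Fin n => (WithLp.toLp 2 (Pᵀ j) : EuclideanSpace ℝ (Fin m)))) :
    (Pᵀ * P) * (Pᵀ * P)⁻¹ = 1 := by
  apply Matrix.mul_nonsing_inv
  rw [isUnit_iff_ne_zero]
  intro hdet
  obtain ⟨v, hv, hv0⟩ := Matrix.exists_mulVec_eq_zero_iff.mpr hdet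
  have hPv : P *ᵥ v = 0 := by
    have h1 : v ⬝ᵥ ((Pᵀ * P) *ᵥ v) = (P *ᵥ v) ⬝ᵥ (P *ᵥ v) := by
      rw [← Matrix.mulVec_mulVec, Matrix.dotProduct_mulVec, Matrix.vecMul_transpose]
    rw [hv0, dotProduct_zero] at h1
    exact dotProduct_self_eq_zero.mp h1.symm
  apply hv
  funext j
  refine Fintype.linearIndependent_iff.mp hP v ?_ j
  ext i
  have : (∑ j : Fin n, v j • (WithLp.toLp 2 (Pᵀ j) : EuclideanSpace ℝ (Fin m))) i
      = ∑ j : Fin n, v j * P i j := by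
    simp [Finset.sum_apply]
  rw [this]
  have := congrFun hPv i
  simpa [Matrix.mulVec, dotProduct, mul_comm] using this


lemma proj_eq {m n : ℕ} (P : Matrix (Fin m) (Fin n) ℝ)
    (hP : LinearIndependent ℝ (fun j : Fin n => (WithLp.toLp 2 (Pᵀ j) : EuclideanSpace ℝ (Fin m))))
    (Psub : Submodule ℝ (EuclideanSpace ℝ (Fin m)))
    (hPsub : Psub = Submodule.span ℝ
      (Set.range fun j : Fin n => (WithLp.toLp 2 (Pᵀ j) : EuclideanSpace ℝ (Fin m))))
    (x : EuclideanSpace ℝ (Fin m)) :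
    (Psub.orthogonalProjectionOnto x : EuclideanSpace ℝ (Fin m))
      = (P * (Pᵀ * P)⁻¹ * Pᵀ) *ᵥ x := by
  have hG := gram_inv P hP
  suffices hs : Psub.starProjection x = WithLp.toLp 2 ((P * (Pᵀ * P)⁻¹ * Pᵀ) *ᵥ x) by
    exact congrArg WithLp.ofLp hs
  apply Submodule.eq_starProjection_of_mem_of_inner_eq_zero
  · -- membership
    rw [hPsub]
    have : (WithLp.toLp 2 ((P * (Pᵀ * P)⁻¹ * Pᵀ) *ᵥ x) : EuclideanSpace ℝ (Fin m))
        = ∑ j : Fin n, (((Pᵀ * P)⁻¹ * Pᵀ) *ᵥ x) j • (WithLp.toLp 2 (Pᵀ j) : EuclideanSpace ℝ (Fin m)) := by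
      ext i
      simp only [Finset.sum_apply, Matrix.mul_assoc, ← Matrix.mulVec_mulVec]
      simp [Matrix.mulVec, dotProduct, mul_comm]
    rw [this]
    exact Submodule.sum_mem _ fun j _ =>
      Submodule.smul_mem _ _ (Submodule.subset_span ⟨j, rfl⟩)
  · -- orthogonality
    intro w hw
    rw [hPsub] at hw
    induction hw using Submodule.span_induction with
    | mem y hy =>
      obtain ⟨j, rfl⟩ := hy
      have hmat : Pᵀ * (P * (Pᵀ * P)⁻¹ * Pᵀ) = Pᵀ := by
        calc Pᵀ * (P * (Pᵀ * P)⁻¹ * Pᵀ) = ((Pᵀ * P) * (Pᵀ * P)⁻¹) * Pᵀ := by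
              rw [Matrix.mul_assoc, Matrix.mul_assoc, Matrix.mul_assoc]
          _ = Pᵀ := by rw [hG, Matrix.one_mul]
      have h2 : (Pᵀ *ᵥ ((P * (Pᵀ * P)⁻¹ * Pᵀ) *ᵥ x)) j = (Pᵀ *ᵥ x) j := by
        rw [Matrix.mulVec_mulVec, hmat]
      have key : ∑ i : Fin m, P i j * (x i - ((P * (Pᵀ * P)⁻¹ * Pᵀ) *ᵥ x) i) = 0 := by
        simp only [mul_sub, Finset.sum_sub_distrib]
        have e1 : ∑ i : Fin m, P i j * x i = (Pᵀ *ᵥ x) j := by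
          simp [Matrix.mulVec, dotProduct]
        have e2 : ∑ i : Fin m, P i j * ((P * (Pᵀ * P)⁻¹ * Pᵀ) *ᵥ x) i
            = (Pᵀ *ᵥ ((P * (Pᵀ * P)⁻¹ * Pᵀ) *ᵥ x)) j := by
          simp [Matrix.mulVec, dotProduct]
        rw [e1, e2, h2, sub_self]
      rw [PiLp.inner_apply]
      simpa [mul_comm, mul_sub, Finset.sum_sub_distrib] using key
    | zero => exact inner_zero_right _
    | add y z hy hz ihy ihz => rw [inner_add_right, ihy, ihz, add_zero]
    | smul c y hy ihy => rw [inner_smul_right, ihy, mul_zero]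

lemma pyth {E : Type*} [NormedAddCommGroup E] [InnerProductSpace ℝ E]
    (K : Submodule ℝ E) [K.HasOrthogonalProjection] (x p₀ : E) (hp₀ : p₀ ∈ K) :
    dist x p₀ ^ 2 = ‖x - (K.orthogonalProjectionOnto x : E)‖ ^ 2
      + ‖(K.orthogonalProjectionOnto x : E) - p₀‖ ^ 2 := by
  set q : E := (K.orthogonalProjectionOnto x : E) with hq
  have hsplit : x - p₀ = (x - q) + (q - p₀) := by abel
  have horth : (inner ℝ (x - q) (q - p₀) : ℝ) = 0 := by
    have h1 : x - q ∈ Kᗮ := K.sub_starProjection_mem_orthogonal x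
    have h2 : q - p₀ ∈ K := Submodule.sub_mem _ (SetLike.coe_mem _) hp₀
    exact (Submodule.mem_orthogonal' K _).mp h1 _ h2
  rw [dist_eq_norm, hsplit, norm_add_sq_real, horth]
  ring


set_option maxHeartbeats 2000000 in
/-- Proposition 1, case 2 (`w₁ ≠ 0`): for `l_pred = (t_pred, l')ᵀ ∈ ℒ`, there exists `p₀ ∈ 𝒫`
with `d(l_pred, p₀) = d(ℒ,𝒫)` (the minimum of `d(l,p)` over `l ∈ ℒ`, `p ∈ 𝒫`) if and only if
`t_pred = -(1/‖w₁‖²)·w₁ᵀW'l'`; moreover in that case `d(l_pred,p₀) = d(ℒ,𝒫)` holds exactly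
for `p₀ = proj_𝒫(l_pred)`. -/
theorem stmt_1 {r n : ℕ} (hr : 1 ≤ r)
    (P : Matrix (Fin (r + 1)) (Fin n) ℝ)
    (hP : LinearIndependent ℝ (fun j : Fin n => (WithLp.toLp 2 (Pᵀ j) : EuclideanSpace ℝ (Fin (r + 1)))))
    (Psub : Submodule ℝ (EuclideanSpace ℝ (Fin (r + 1))))
    (hPsub : Psub = Submodule.span ℝ
      (Set.range fun j : Fin n => (WithLp.toLp 2 (Pᵀ j) : EuclideanSpace ℝ (Fin (r + 1)))))
    (W : Matrix (Fin (r + 1)) (Fin (r + 1)) ℝ)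
    (hW : W = P * (Pᵀ * P)⁻¹ * Pᵀ - 1)
    (w₁ : EuclideanSpace ℝ (Fin (r + 1))) (hw₁ : w₁ = fun i => W i 0)
    (W' : Matrix (Fin (r + 1)) (Fin r) ℝ) (hW' : W' = fun i j => W i j.succ)
    (l' : Fin r → ℝ)
    (L : Set (EuclideanSpace ℝ (Fin (r + 1))))
    (hL : L = {x : EuclideanSpace ℝ (Fin (r + 1)) | ∃ t : ℝ, x = WithLp.toLp 2 (Fin.cons t l')})
    (hw : w₁ ≠ 0) :
    ∀ (tpred : ℝ) (lpred : EuclideanSpace ℝ (Fin (r + 1))), lpred = WithLp.toLp 2 (Fin.cons tpred l') →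
      ((∃ p₀ ∈ Psub, dist lpred p₀ = setDist L ↑Psub) ↔
        tpred = -(1 / ‖w₁‖ ^ 2) * (w₁ ⬝ᵥ W'.mulVec l')) ∧
      (tpred = -(1 / ‖w₁‖ ^ 2) * (w₁ ⬝ᵥ W'.mulVec l') →
        ∀ p₀ ∈ Psub, (dist lpred p₀ = setDist L ↑Psub ↔
          p₀ = (Psub.orthogonalProjectionOnto lpred : EuclideanSpace ℝ (Fin (r + 1))))) := by
  set tstar : ℝ := -(1 / ‖w₁‖ ^ 2) * (w₁ ⬝ᵥ W'.mulVec l') with htstar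
  have hxt : ∃ xt : ℝ → EuclideanSpace ℝ (Fin (r + 1)), ∀ t, xt t = WithLp.toLp 2 (Fin.cons t l') :=
    ⟨fun t => WithLp.toLp 2 (Fin.cons t l'), fun t => rfl⟩
  obtain ⟨xt, hxt⟩ := hxt
  set v : EuclideanSpace ℝ (Fin (r + 1)) := WithLp.toLp 2 (W'.mulVec l') with hv
  have hproj : ∀ x : EuclideanSpace ℝ (Fin (r + 1)),
      (Psub.orthogonalProjectionOnto x : EuclideanSpace ℝ (Fin (r + 1)))
        = (P * (Pᵀ * P)⁻¹ * Pᵀ) *ᵥ x := proj_eq P hP Psub hPsub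
  -- W *ᵥ x = proj x - x
  have hWx : ∀ x : EuclideanSpace ℝ (Fin (r + 1)),
      (WithLp.toLp 2 (W *ᵥ x : Fin (r+1) → ℝ) : EuclideanSpace ℝ (Fin (r + 1)))
        = (Psub.orthogonalProjectionOnto x : EuclideanSpace ℝ (Fin (r + 1))) - x := by
    intro x
    ext i
    simp only [PiLp.toLp_apply, PiLp.sub_apply]
    rw [hproj x, hW]
    simp [Matrix.sub_mulVec, Matrix.one_mulVec]
  -- W *ᵥ xt t = t • w₁ + v
  have hcons : ∀ t : ℝ,
      (WithLp.toLp 2 (W *ᵥ (xt t) : Fin (r+1) → ℝ) : EuclideanSpace ℝ (Fin (r + 1)))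
        = t • w₁ + v := by
    intro t
    ext i
    have hx := hxt t
    have : (W *ᵥ (xt t)) i
        = W i 0 * t + ∑ j : Fin r, W i j.succ * l' j := by
      rw [hx]
      simp [Matrix.mulVec, dotProduct, Fin.sum_univ_succ]
    rw [WithLp.ofLp_toLp, this]
    have h2 : (t • w₁ + v) i = t * w₁ i + v i := rfl
    rw [h2, hw₁, hv, hW']
    simp [Matrix.mulVec, dotProduct, mul_comm]
  have hb : (inner ℝ w₁ v : ℝ) = w₁ ⬝ᵥ W'.mulVec l' := by
    rw [PiLp.inner_apply]
    simp [hv, dotProduct, mul_comm]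
  have ha : (0:ℝ) < ‖w₁‖ ^ 2 := by
    have := norm_pos_iff.mpr hw
    positivity
  -- quadratic identity
  have hsq : ∀ t : ℝ, ‖t • w₁ + v‖ ^ 2
      = ‖tstar • w₁ + v‖ ^ 2 + ‖w₁‖ ^ 2 * (t - tstar) ^ 2 := by
    intro t
    have expand : ∀ s : ℝ, ‖s • w₁ + v‖ ^ 2
        = s ^ 2 * ‖w₁‖ ^ 2 + 2 * s * (w₁ ⬝ᵥ W'.mulVec l') + ‖v‖ ^ 2 := by
      intro s
      rw [norm_add_sq_real, real_inner_smul_left, hb, norm_smul]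
      simp [mul_pow, sq_abs]
      ring
    rw [expand, expand, htstar]
    field_simp
    ring
  -- Pythagoras
  have hdsq : ∀ (t : ℝ) (p₀ : EuclideanSpace ℝ (Fin (r + 1))), p₀ ∈ Psub →
      dist (xt t) p₀ ^ 2
        = ‖t • w₁ + v‖ ^ 2
          + ‖(Psub.orthogonalProjectionOnto (xt t) : EuclideanSpace ℝ (Fin (r + 1))) - p₀‖ ^ 2 := by
    intro t p₀ hp₀
    have hnx : xt t - (Psub.orthogonalProjectionOnto (xt t) : EuclideanSpace ℝ (Fin (r + 1)))
        = -(t • w₁ + v) := by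
      rw [← hcons t, hWx (xt t)]; abel
    have := pyth Psub (xt t) p₀ hp₀
    rw [hnx, norm_neg] at this
    exact this
  -- distance to projection
  have hdp : ∀ t : ℝ,
      dist (xt t) (Psub.orthogonalProjectionOnto (xt t) : EuclideanSpace ℝ (Fin (r + 1)))
        = ‖t • w₁ + v‖ := by
    intro t
    have h := hdsq t _ (SetLike.coe_mem (Psub.orthogonalProjectionOnto (xt t)))
    rw [sub_self, norm_zero] at h
    have hd0 : (0:ℝ) ≤ dist (xt t)
        (Psub.orthogonalProjectionOnto (xt t) : EuclideanSpace ℝ (Fin (r + 1))) := dist_nonneg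
    nlinarith [norm_nonneg (t • w₁ + v)]
  -- setDist value
  have hset : setDist L ↑Psub = ‖tstar • w₁ + v‖ := by
    have hlow : ∀ z ∈ Set.image2 dist L (↑Psub : Set (EuclideanSpace ℝ (Fin (r+1)))),
        ‖tstar • w₁ + v‖ ≤ z := by
      rintro z ⟨l, hl, p, hp, rfl⟩
      rw [hL] at hl
      obtain ⟨t, hl⟩ := hl
      rw [← hxt t] at hl
      subst hl
      have h1 := hdsq t p hp
      have h2 := hsq t
      have h3 : ‖tstar • w₁ + v‖ ^ 2 ≤ dist (xt t) p ^ 2 := by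
        nlinarith [sq_nonneg (t - tstar),
          sq_nonneg ‖(Psub.orthogonalProjectionOnto (xt t) : EuclideanSpace ℝ (Fin (r+1))) - p‖]
      have hz : (0:ℝ) ≤ dist (xt t) p := dist_nonneg
      have e := Real.sqrt_le_sqrt h3
      rwa [Real.sqrt_sq (norm_nonneg _), Real.sqrt_sq hz] at e
    have hmem : ‖tstar • w₁ + v‖ ∈ Set.image2 dist L (↑Psub : Set (EuclideanSpace ℝ (Fin (r+1)))) := by
      refine ⟨xt tstar, ?_, _,
        SetLike.coe_mem (Psub.orthogonalProjectionOnto (xt tstar)), hdp tstar⟩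
      rw [hL]
      exact ⟨tstar, hxt tstar⟩
    rw [setDist]
    exact le_antisymm (csInf_le ⟨0, fun z hz => by
      obtain ⟨l, _, p, _, rfl⟩ := hz; exact dist_nonneg⟩ hmem) (le_csInf ⟨_, hmem⟩ hlow)
  -- main goals
  intro tpred lpred hlp
  rw [← hxt tpred] at hlp
  subst hlp
  constructor
  · constructor
    · rintro ⟨p₀, hp₀, hd⟩
      have h1 := hdsq tpred p₀ hp₀
      rw [hd, hset, hsq tpred] at h1
      have h2 : (tpred - tstar) ^ 2 = 0 := by
        nlinarith [sq_nonneg ‖(Psub.orthogonalProjectionOnto (xt tpred) : EuclideanSpace ℝ (Fin (r+1))) - p₀‖,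
          sq_nonneg (tpred - tstar)]
      have h3 := pow_eq_zero_iff (n := 2) (by norm_num) |>.mp h2
      exact sub_eq_zero.mp h3
    · intro ht
      refine ⟨(Psub.orthogonalProjectionOnto (xt tpred) : EuclideanSpace ℝ (Fin (r+1))),
        SetLike.coe_mem _, ?_⟩
      rw [hdp tpred, hset, ht]
  · intro ht p₀ hp₀
    have e : tpred - tstar = 0 := by rw [ht, sub_self]
    constructor
    · intro hd
      have h1 := hdsq tpred p₀ hp₀
      rw [hd, hset, hsq tpred, e] at h1
      norm_num at h1
      rw [sub_eq_zero] at h1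
      exact h1.symm
    · intro h
      rw [h, hdp tpred, hset, ht]
end

section
/- Let P be an arbitrary m×n real matrix of rank r and let P_e be an m×r matrix whose columns are linearly independent and span the same subspace 𝒫 as the columns of P (for example, the nonzero columns of a column echelon form of P). Set W = P_e(P_eᵀP_e)⁻¹P_eᵀ − E_m = [w₁|W']. Then: (1) if w₁ = 0, then for every l ∈ ℒ, d(l,𝒫) = d(ℒ,𝒫) and this distance is attained by some p ∈ 𝒫; (2) if w₁ ≠ 0, then for l_pred = (t_pred, l')ᵀ ∈ ℒ there exists p₀ ∈ 𝒫 with d(l_pred, p₀) = d(ℒ,𝒫) if and only if t_pred = −(1/‖w₁‖²)·w₁ᵀ W' l'. -/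
open RealInnerProductSpace


open Matrix

/-- Proposition 2: `P` is an arbitrary `m × n` matrix of rank `r` and `P_e` is an `m × r`
matrix with linearly independent columns spanning the same subspace `𝒫` as the columns of `P`.
With `W = P_e(P_eᵀP_e)⁻¹P_eᵀ - E_m = [w₁|W']`:
(1) if `w₁ = 0` then for every `l ∈ ℒ`, `d(l,𝒫) = d(ℒ,𝒫)` and this distance is attained;
(2) if `w₁ ≠ 0` then `l_pred = (t_pred,l')ᵀ ∈ ℒ` attains `d(ℒ,𝒫)` iff
`t_pred = -(1/‖w₁‖²)·w₁ᵀW'l'`. -/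
theorem stmt_3 {q n r : ℕ} (hq : 1 ≤ q)
    (P : Matrix (Fin (q + 1)) (Fin n) ℝ) (hrank : P.rank = r)
    (Pe : Matrix (Fin (q + 1)) (Fin r) ℝ)
    (hPe : LinearIndependent ℝ (fun j : Fin r => (WithLp.toLp 2 (Peᵀ j) : EuclideanSpace ℝ (Fin (q + 1)))))
    (Psub : Submodule ℝ (EuclideanSpace ℝ (Fin (q + 1))))
    (hPsub : Psub = Submodule.span ℝ
      (Set.range fun j : Fin n => (WithLp.toLp 2 (Pᵀ j) : EuclideanSpace ℝ (Fin (q + 1)))))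
    (hspan : Submodule.span ℝ
        (Set.range fun j : Fin r => (WithLp.toLp 2 (Peᵀ j) : EuclideanSpace ℝ (Fin (q + 1)))) = Psub)
    (W : Matrix (Fin (q + 1)) (Fin (q + 1)) ℝ)
    (hW : W = Pe * (Peᵀ * Pe)⁻¹ * Peᵀ - 1)
    (w₁ : EuclideanSpace ℝ (Fin (q + 1))) (hw₁ : w₁ = fun i => W i 0)
    (W' : Matrix (Fin (q + 1)) (Fin q) ℝ) (hW' : W' = fun i j => W i j.succ)
    (l' : Fin q → ℝ)
    (L : Set (EuclideanSpace ℝ (Fin (q + 1))))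
    (hL : L = {x : EuclideanSpace ℝ (Fin (q + 1)) | ∃ t : ℝ, x = WithLp.toLp 2 (Fin.cons t l' : Fin (q + 1) → ℝ)}) :
    (w₁ = 0 → ∀ l ∈ L,
      Metric.infDist l ↑Psub = setDist L ↑Psub ∧
      ∃ p ∈ Psub, dist l p = setDist L ↑Psub) ∧
    (w₁ ≠ 0 → ∀ (tpred : ℝ) (lpred : EuclideanSpace ℝ (Fin (q + 1))),
      lpred = WithLp.toLp 2 (Fin.cons tpred l' : Fin (q + 1) → ℝ) →
      ((∃ p₀ ∈ Psub, dist lpred p₀ = setDist L ↑Psub) ↔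
        tpred = -(1 / ‖w₁‖ ^ 2) * (w₁ ⬝ᵥ W'.mulVec l'))) := by
  classical
  have sqle : ∀ a b : ℝ, 0 ≤ a → 0 ≤ b → a^2 ≤ b^2 → a ≤ b := by
    intro a b ha hb h; nlinarith
  -- inner product is dot product
  have hinner : ∀ x y : EuclideanSpace ℝ (Fin (q+1)), ⟪x, y⟫ = (x : Fin (q+1) → ℝ) ⬝ᵥ (y : Fin (q+1) → ℝ) := by
    intro x y
    simp [PiLp.inner_apply, dotProduct, RCLike.inner_apply, conj_trivial]
    exact Finset.sum_congr rfl (fun _ _ => mul_comm _ _)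
  -- columns of Pe injective on coefficients
  have hcol : ∀ c : Fin r → ℝ, Pe.mulVec c = 0 → c = 0 := by
    intro c hc
    funext j
    refine Fintype.linearIndependent_iff.mp hPe c ?_ j
    ext i
    simpa [Matrix.mulVec, dotProduct, mul_comm] using congrFun hc i
  have hdet : (Peᵀ * Pe).det ≠ 0 := by
    intro hdet
    obtain ⟨v, hv0, hv⟩ := (Matrix.exists_mulVec_eq_zero_iff).mpr hdet
    apply hv0
    apply hcol
    have h1 : Pe.mulVec v ⬝ᵥ Pe.mulVec v = 0 := by
      have h2 := congrArg (fun w => v ⬝ᵥ w) hv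
      simpa [← Matrix.mulVec_mulVec, dotProduct_mulVec, Matrix.vecMul_transpose]
        using h2
    exact dotProduct_self_eq_zero.mp h1
  have hunit : IsUnit (Peᵀ * Pe).det := isUnit_iff_ne_zero.mpr hdet
  set Q : EuclideanSpace ℝ (Fin (q+1)) → EuclideanSpace ℝ (Fin (q+1)) :=
    fun x => WithLp.toLp 2 ((Pe * (Peᵀ * Pe)⁻¹ * Peᵀ).mulVec x : Fin (q+1) → ℝ) with hQ
  have hQmem : ∀ x : EuclideanSpace ℝ (Fin (q+1)), Q x ∈ Psub := by
    intro x
    rw [← hspan, Submodule.mem_span_range_iff_exists_fun]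
    refine ⟨(Peᵀ * Pe)⁻¹.mulVec (Peᵀ.mulVec x), ?_⟩
    show (∑ i : Fin r, _ • (WithLp.toLp 2 (Peᵀ i) : EuclideanSpace ℝ (Fin (q+1)))) = WithLp.toLp 2 ((Pe * (Peᵀ * Pe)⁻¹ * Peᵀ).mulVec x : Fin (q+1) → ℝ)
    ext i
    simp only [← Matrix.mulVec_mulVec]
    simp [Matrix.mulVec, dotProduct, mul_comm]
  have hPeT0 : ∀ y : Fin (q+1) → ℝ,
      Peᵀ.mulVec (y - (Pe * (Peᵀ * Pe)⁻¹ * Peᵀ).mulVec y) = 0 := by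
    intro y
    have h1 : Peᵀ * (Pe * (Peᵀ * Pe)⁻¹ * Peᵀ) = Peᵀ := by
      rw [show Peᵀ * (Pe * (Peᵀ * Pe)⁻¹ * Peᵀ) = ((Peᵀ * Pe) * (Peᵀ * Pe)⁻¹) * Peᵀ by
        rw [← Matrix.mul_assoc, ← Matrix.mul_assoc],
        Matrix.mul_nonsing_inv _ hunit, Matrix.one_mul]
    rw [Matrix.mulVec_sub, Matrix.mulVec_mulVec, h1]
    simp
  have hPeT : ∀ x : EuclideanSpace ℝ (Fin (q+1)), Peᵀ.mulVec (x - Q x) = 0 := fun x => hPeT0 x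
  -- orthogonality
  have horth : ∀ x : EuclideanSpace ℝ (Fin (q+1)), ∀ p ∈ Psub, ⟪x - Q x, p⟫ = 0 := by
    intro x p hp
    rw [← hspan, Submodule.mem_span_range_iff_exists_fun] at hp
    obtain ⟨c, hc⟩ := hp
    have hsum : (∑ i : Fin r, c i • (WithLp.toLp 2 (Peᵀ i) : EuclideanSpace ℝ (Fin (q+1)))) = WithLp.toLp 2 (Pe.mulVec c : Fin (q+1) → ℝ) := by
      ext i
      simp [Matrix.mulVec, dotProduct, mul_comm]
    rw [← hc, hsum, hinner, dotProduct_mulVec, ← Matrix.mulVec_transpose, WithLp.ofLp_sub, hPeT x]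
    simp
  -- Pythagoras lower bound and attainment
  have hpyth : ∀ x : EuclideanSpace ℝ (Fin (q+1)), ∀ p ∈ Psub, ‖x - Q x‖ ≤ dist x p := by
    intro x p hp
    have hqp : Q x - p ∈ Psub := Psub.sub_mem (hQmem x) hp
    have hin : ⟪x - Q x, Q x - p⟫ = 0 := horth x _ hqp
    have hd : dist x p = ‖(x - Q x) + (Q x - p)‖ := by
      rw [dist_eq_norm]; congr 1; abel
    rw [hd]
    refine sqle _ _ (norm_nonneg _) (norm_nonneg _) ?_
    rw [norm_add_sq_real, hin]
    linarith [sq_nonneg ‖Q x - p‖]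
  have hdQ : ∀ x : EuclideanSpace ℝ (Fin (q+1)), dist x (Q x) = ‖x - Q x‖ := fun x => dist_eq_norm _ _
  set cL : ℝ → EuclideanSpace ℝ (Fin (q+1)) := fun t => WithLp.toLp 2 (Fin.cons t l' : Fin (q+1) → ℝ) with hcL
  have hWx0 : ∀ y : Fin (q+1) → ℝ,
      W.mulVec y = (Pe * (Peᵀ * Pe)⁻¹ * Peᵀ).mulVec y - y := by
    intro y; rw [hW, Matrix.sub_mulVec, Matrix.one_mulVec]
  set v : EuclideanSpace ℝ (Fin (q+1)) := WithLp.toLp 2 (W'.mulVec l' : Fin (q+1) → ℝ) with hv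
  have hWcons : ∀ t : ℝ, (WithLp.toLp 2 (W.mulVec (Fin.cons t l')) : EuclideanSpace ℝ (Fin (q+1))) = t • w₁ + v := by
    intro t
    rw [hv, hW']
    ext i
    simp [hw₁, Matrix.mulVec, dotProduct, Fin.sum_univ_succ, mul_comm]
  have hsubQ : ∀ t : ℝ, ‖cL t - Q (cL t)‖ = ‖t • w₁ + v‖ := by
    intro t
    have h2 : (WithLp.toLp 2 (W.mulVec (Fin.cons t l')) : EuclideanSpace ℝ (Fin (q+1))) = Q (cL t) - cL t := by rw [hWx0, WithLp.toLp_sub]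
    have h1 : cL t - Q (cL t) = -(t • w₁ + v) := by
      rw [← hWcons t, h2]; abel
    rw [h1, norm_neg]
  -- norm expansion
  have hexp : ∀ t : ℝ, ‖t • w₁ + v‖^2 = t^2*‖w₁‖^2 + 2*t*⟪w₁,v⟫ + ‖v‖^2 := by
    intro t
    rw [norm_add_sq_real, real_inner_smul_left, norm_smul]
    simp [mul_pow]
    ring
  -- L facts
  have hmemL : ∀ t : ℝ, cL t ∈ L := by
    intro t; rw [hL]; exact ⟨t, rfl⟩
  have hbdd : BddBelow (Set.image2 dist L (↑Psub : Set (EuclideanSpace ℝ (Fin (q+1))))) := by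
    refine ⟨0, ?_⟩
    rintro d ⟨a, _, b, _, rfl⟩
    exact dist_nonneg
  -- setDist characterization
  have setdist_eq : ∀ t₀ : ℝ, (∀ t : ℝ, ‖t₀ • w₁ + v‖ ≤ ‖t • w₁ + v‖) →
      setDist L (↑Psub : Set (EuclideanSpace ℝ (Fin (q+1)))) = ‖t₀ • w₁ + v‖ := by
    intro t₀ hmin
    apply le_antisymm
    · apply csInf_le hbdd
      refine ⟨cL t₀, hmemL t₀, Q (cL t₀), hQmem _, ?_⟩
      rw [hdQ, hsubQ]
    · apply le_csInf ⟨_, Set.mem_image2_of_mem (hmemL 0)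
        (SetLike.mem_coe.mpr (hQmem (cL 0)))⟩
      rintro d ⟨l, hl, p, hp, rfl⟩
      rw [hL] at hl
      obtain ⟨t, hlt⟩ := hl
      have hlt' : l = cL t := hlt
      subst hlt'
      exact le_trans (hmin t) (le_trans (le_of_eq (hsubQ t).symm) (hpyth _ p hp))
  have hPsubne : (↑Psub : Set (EuclideanSpace ℝ (Fin (q+1)))).Nonempty := ⟨0, Psub.zero_mem⟩
  -- infDist characterization
  have hinf : ∀ t : ℝ, Metric.infDist (cL t) (↑Psub : Set (EuclideanSpace ℝ (Fin (q+1)))) = ‖t • w₁ + v‖ := by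
    intro t
    apply le_antisymm
    · rw [← hsubQ t, ← hdQ]
      exact Metric.infDist_le_dist_of_mem (hQmem _)
    · by_contra hlt
      push_neg at hlt
      obtain ⟨y, hy, hdy⟩ := (Metric.infDist_lt_iff hPsubne).mp hlt
      exact absurd (le_trans (le_of_eq (hsubQ t).symm) (hpyth _ y hy)) (not_le.mpr hdy)
  constructor
  · -- case w₁ = 0
    intro h0 l hl
    rw [hL] at hl
    obtain ⟨t, hlt⟩ := hl
    have hlt' : l = cL t := hlt
    subst hlt'
    have hconst : ∀ s : ℝ, ‖s • w₁ + v‖ = ‖v‖ := by intro s; rw [h0]; simp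
    have hsd : setDist L (↑Psub : Set (EuclideanSpace ℝ (Fin (q+1)))) = ‖v‖ := by
      rw [setdist_eq 0 (fun s => by rw [hconst 0, hconst s])]
      exact hconst 0
    refine ⟨by rw [hinf t, hconst t, hsd], ⟨Q (cL t), hQmem _, ?_⟩⟩
    rw [hdQ, hsubQ, hconst t, hsd]
  · -- case w₁ ≠ 0
    intro hne tpred lpred hlpred
    have hnw : (0:ℝ) < ‖w₁‖^2 := pow_pos (norm_pos_iff.mpr hne) 2
    set tstar : ℝ := -(1 / ‖w₁‖ ^ 2) * (w₁ ⬝ᵥ W'.mulVec l') with htstar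
    have hip : ⟪w₁, v⟫ = w₁ ⬝ᵥ W'.mulVec l' := by rw [hinner, hv]
    have hsq : ∀ t : ℝ, ‖t • w₁ + v‖^2 = ‖w₁‖^2*(t - tstar)^2 + ‖tstar • w₁ + v‖^2 := by
      intro t
      rw [hexp t, hexp tstar, htstar, ← hip]
      field_simp
      ring
    have hmin : ∀ t : ℝ, ‖tstar • w₁ + v‖ ≤ ‖t • w₁ + v‖ := by
      intro t
      refine sqle _ _ (norm_nonneg _) (norm_nonneg _) ?_
      rw [hsq t]
      linarith [mul_nonneg (le_of_lt hnw) (sq_nonneg (t - tstar))]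
    have hsd : setDist L (↑Psub : Set (EuclideanSpace ℝ (Fin (q+1)))) = ‖tstar • w₁ + v‖ := setdist_eq tstar hmin
    have hlp' : lpred = cL tpred := hlpred
    subst hlp'
    constructor
    · rintro ⟨p₀, hp₀, hd⟩
      have h1 : ‖tpred • w₁ + v‖ ≤ dist (cL tpred) p₀ := by
        rw [← hsubQ tpred]; exact hpyth _ p₀ hp₀
      rw [hd, hsd] at h1
      have heq : ‖tpred • w₁ + v‖ = ‖tstar • w₁ + v‖ := le_antisymm h1 (hmin tpred)
      have h2 := hsq tpred
      rw [heq] at h2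
      have h3 : ‖w₁‖^2 * (tpred - tstar)^2 = 0 := by linarith
      have h4 : (tpred - tstar)^2 = 0 := by
        rcases mul_eq_zero.mp h3 with h | h
        · exact absurd h (ne_of_gt hnw)
        · exact h
      have h6 : tpred = tstar := by
        have := sq_eq_zero_iff.mp h4
        linarith
      exact h6
    · intro ht
      refine ⟨Q (cL tpred), hQmem _, ?_⟩
      rw [hdQ, hsubQ, hsd, ht]
end

section
/- Assume w₁ ≠ 0. Let t₁, t₂, t₃ be three distinct real numbers, let l_i = (t_i, l')ᵀ ∈ ℒ, and let d_i = ‖proj_𝒫(l_i) − l_i‖² for i = 1,2,3. Let (a₀, a₁, a₂) be the solution of the linear system with Vandermonde matrix rows (1, t_i, t_i²) and right-hand side (d₁, d₂, d₃). Then a₂ = ‖w₁‖² > 0, and for l_pred = (t_pred, l')ᵀ ∈ ℒ there exists p₀ ∈ 𝒫 with d(l_pred, p₀) = d(ℒ,𝒫) if and only if t_pred = −a₁/(2a₂). -/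
open Matrix


theorem projEq {m n : ℕ} (P : Matrix (Fin m) (Fin n) ℝ)
    (hG : IsUnit (Pᵀ * P))
    (Psub : Submodule ℝ (EuclideanSpace ℝ (Fin m)))
    (hPsub : Psub = Submodule.span ℝ
      (Set.range fun j : Fin n => (WithLp.toLp 2 (Pᵀ j) : EuclideanSpace ℝ (Fin m))))
    [Submodule.HasOrthogonalProjection Psub]
    (x : EuclideanSpace ℝ (Fin m)) :
    (Submodule.orthogonalProjectionOnto Psub x : EuclideanSpace ℝ (Fin m))
      = WithLp.toLp 2 ((P * (Pᵀ * P)⁻¹ * Pᵀ).mulVec x.ofLp) := by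
  have hdet : IsUnit (Pᵀ * P).det := (Matrix.isUnit_iff_isUnit_det _).mp hG
  have hinv : (Pᵀ * P) * (Pᵀ * P)⁻¹ = 1 := Matrix.mul_nonsing_inv _ hdet
  have hmem : WithLp.toLp 2 ((P * (Pᵀ * P)⁻¹ * Pᵀ).mulVec x.ofLp) ∈ Psub := by
    rw [hPsub, Matrix.mul_assoc, ← Matrix.mulVec_mulVec]
    have : WithLp.toLp 2 (P.mulVec (((Pᵀ * P)⁻¹ * Pᵀ).mulVec x.ofLp))
        = ∑ j, (((Pᵀ * P)⁻¹ * Pᵀ).mulVec x.ofLp) j • (WithLp.toLp 2 (Pᵀ j) : EuclideanSpace ℝ (Fin m)) := by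
      ext i
      simp [Matrix.mulVec, dotProduct, WithLp.ofLp_sum, Finset.sum_apply, mul_comm]
    rw [this]
    exact Submodule.sum_mem _ fun j _ =>
      Submodule.smul_mem _ _ (Submodule.subset_span ⟨j, rfl⟩)
  rw [← Submodule.starProjection_apply]
  refine Submodule.eq_starProjection_of_mem_of_inner_eq_zero hmem ?_
  intro w hw
  rw [hPsub] at hw
  have hPtQ : Pᵀ * (P * (Pᵀ * P)⁻¹ * Pᵀ) = Pᵀ := by
    simp only [← Matrix.mul_assoc]
    rw [hinv, Matrix.one_mul]
  have hkj : ∀ j, ∑ i, (x i - ((P * (Pᵀ * P)⁻¹ * Pᵀ).mulVec x.ofLp) i) * P i j = 0 := by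
    intro j
    have h2 : (Pᵀ * (P * (Pᵀ * P)⁻¹ * Pᵀ)).mulVec x.ofLp = Pᵀ.mulVec x.ofLp := by rw [hPtQ]
    rw [← Matrix.mulVec_mulVec] at h2
    have h3 := congrFun h2 j
    simp only [sub_mul, Finset.sum_sub_distrib]
    rw [sub_eq_zero]
    have h4 : x.ofLp ᵥ* P = ((P * (Pᵀ * P)⁻¹ * Pᵀ) *ᵥ x.ofLp) ᵥ* P := by
      rw [← Matrix.mulVec_transpose, ← Matrix.mulVec_transpose, h2]
    have h5 := congrFun h4 j
    simp only [Matrix.vecMul, dotProduct] at h5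
    exact h5
  induction hw using Submodule.span_induction with
  | mem z hz =>
    obtain ⟨j, rfl⟩ := hz
    rw [PiLp.inner_apply]
    simp only [RCLike.inner_apply, conj_trivial, PiLp.sub_apply, PiLp.toLp_apply, Matrix.transpose_apply]
    rw [← hkj j]
    exact Finset.sum_congr rfl fun i _ => by ring
  | zero => simp
  | add y z hy hz hy' hz' => rw [inner_add_right, hy', hz', add_zero]
  | smul c y hy hy' => rw [inner_smul_right, hy', mul_zero]


theorem gramUnit {m n : ℕ} (P : Matrix (Fin m) (Fin n) ℝ)
    (hP : LinearIndependent ℝ (fun j : Fin n => (WithLp.toLp 2 (Pᵀ j) : EuclideanSpace ℝ (Fin m)))) :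
    IsUnit (Pᵀ * P) := by
  rw [← Matrix.mulVec_injective_iff_isUnit]
  have hker : ∀ v : Fin n → ℝ, (Pᵀ * P).mulVec v = 0 → v = 0 := by
    intro v hv
    have hPv : P.mulVec v = 0 := by
      have h0 : v ⬝ᵥ (Pᵀ * P).mulVec v = 0 := by rw [hv]; simp
      rw [← Matrix.mulVec_mulVec, Matrix.dotProduct_mulVec, Matrix.vecMul_transpose] at h0
      exact dotProduct_self_eq_zero.mp h0
    have hsum : (∑ j, v j • (WithLp.toLp 2 (Pᵀ j) : EuclideanSpace ℝ (Fin m))) = 0 := by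
      ext i
      have h1 : (∑ j, v j • (WithLp.toLp 2 (Pᵀ j) : EuclideanSpace ℝ (Fin m))) i = ∑ j, v j * P i j := by
        simp [WithLp.ofLp_sum, Finset.sum_apply]
      rw [h1]
      have := congrFun hPv i
      simpa [Matrix.mulVec, dotProduct, mul_comm] using this
    funext j
    exact (Fintype.linearIndependent_iff.mp hP) v hsum j
  intro u v huv
  have := hker (u - v) (by rw [Matrix.mulVec_sub, huv, sub_self])
  exact sub_eq_zero.mp this

theorem quadCoeff {A B C a₀ a₁ a₂ t₁ t₂ t₃ : ℝ}
    (h12 : t₁ ≠ t₂) (h13 : t₁ ≠ t₃) (h23 : t₂ ≠ t₃)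
    (e₁ : a₀ + a₁ * t₁ + a₂ * t₁ ^ 2 = A * t₁ ^ 2 + B * t₁ + C)
    (e₂ : a₀ + a₁ * t₂ + a₂ * t₂ ^ 2 = A * t₂ ^ 2 + B * t₂ + C)
    (e₃ : a₀ + a₁ * t₃ + a₂ * t₃ ^ 2 = A * t₃ ^ 2 + B * t₃ + C) :
    a₂ = A ∧ a₁ = B ∧ a₀ = C := by
  have d12 : t₁ - t₂ ≠ 0 := sub_ne_zero.mpr h12
  have d13 : t₁ - t₃ ≠ 0 := sub_ne_zero.mpr h13
  have d23 : t₂ - t₃ ≠ 0 := sub_ne_zero.mpr h23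
  have e12 : (a₂ - A) * (t₁ + t₂) + (a₁ - B) = 0 := by
    have h : ((a₂ - A) * (t₁ + t₂) + (a₁ - B)) * (t₁ - t₂) = 0 := by
      linear_combination e₁ - e₂
    rcases mul_eq_zero.mp h with h' | h'
    · exact h'
    · exact absurd h' d12
  have e13 : (a₂ - A) * (t₁ + t₃) + (a₁ - B) = 0 := by
    have h : ((a₂ - A) * (t₁ + t₃) + (a₁ - B)) * (t₁ - t₃) = 0 := by
      linear_combination e₁ - e₃
    rcases mul_eq_zero.mp h with h' | h'
    · exact h'
    · exact absurd h' d13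
  have hA : a₂ = A := by
    have h : (a₂ - A) * (t₂ - t₃) = 0 := by linear_combination e12 - e13
    rcases mul_eq_zero.mp h with h' | h'
    · linarith [sub_eq_zero.mp h']
    · exact absurd h' d23
  have hB : a₁ = B := by
    have := e12; rw [hA] at this; linarith
  refine ⟨hA, hB, ?_⟩
  have := e₁; rw [hA, hB] at this; linarith

set_option maxHeartbeats 800000 in
/-- Proposition 3: assume `w₁ ≠ 0`.  Let `t₁,t₂,t₃` be distinct reals, `lᵢ = (tᵢ,l')ᵀ ∈ ℒ`,
`dᵢ = ‖proj_𝒫(lᵢ) - lᵢ‖²`, and let `(a₀,a₁,a₂)` solve the Vandermonde system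
`a₀ + a₁ tᵢ + a₂ tᵢ² = dᵢ` (`i = 1,2,3`).  Then `a₂ = ‖w₁‖² > 0` and `l_pred = (t_pred,l')ᵀ`
attains `d(ℒ,𝒫)` (there is `p₀ ∈ 𝒫` with `d(l_pred,p₀) = d(ℒ,𝒫)`) iff
`t_pred = -a₁/(2a₂)`. -/
theorem stmt_4 {r n : ℕ} (hr : 1 ≤ r)
    (P : Matrix (Fin (r + 1)) (Fin n) ℝ)
    (hP : LinearIndependent ℝ (fun j : Fin n => (WithLp.toLp 2 (Pᵀ j) : EuclideanSpace ℝ (Fin (r + 1)))))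
    (Psub : Submodule ℝ (EuclideanSpace ℝ (Fin (r + 1))))
    (hPsub : Psub = Submodule.span ℝ
      (Set.range fun j : Fin n => (WithLp.toLp 2 (Pᵀ j) : EuclideanSpace ℝ (Fin (r + 1)))))
    (W : Matrix (Fin (r + 1)) (Fin (r + 1)) ℝ)
    (hW : W = P * (Pᵀ * P)⁻¹ * Pᵀ - 1)
    (w₁ : EuclideanSpace ℝ (Fin (r + 1))) (hw₁ : w₁ = WithLp.toLp 2 (fun i => W i 0))
    (W' : Matrix (Fin (r + 1)) (Fin r) ℝ) (hW' : W' = fun i j => W i j.succ)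
    (l' : Fin r → ℝ)
    (L : Set (EuclideanSpace ℝ (Fin (r + 1))))
    (hL : L = {x : EuclideanSpace ℝ (Fin (r + 1)) | ∃ t : ℝ, x = WithLp.toLp 2 (Fin.cons t l' : Fin (r + 1) → ℝ)})
    (hw : w₁ ≠ 0)
    (t₁ t₂ t₃ : ℝ) (ht12 : t₁ ≠ t₂) (ht13 : t₁ ≠ t₃) (ht23 : t₂ ≠ t₃)
    (l₁ l₂ l₃ : EuclideanSpace ℝ (Fin (r + 1)))
    (hl₁ : l₁ = WithLp.toLp 2 (Fin.cons t₁ l' : Fin (r + 1) → ℝ)) (hl₂ : l₂ = WithLp.toLp 2 (Fin.cons t₂ l' : Fin (r + 1) → ℝ)) (hl₃ : l₃ = WithLp.toLp 2 (Fin.cons t₃ l' : Fin (r + 1) → ℝ))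
    (d₁ d₂ d₃ : ℝ)
    (hd₁ : d₁ = ‖(Submodule.orthogonalProjectionOnto Psub l₁ : EuclideanSpace ℝ (Fin (r + 1))) - l₁‖ ^ 2)
    (hd₂ : d₂ = ‖(Submodule.orthogonalProjectionOnto Psub l₂ : EuclideanSpace ℝ (Fin (r + 1))) - l₂‖ ^ 2)
    (hd₃ : d₃ = ‖(Submodule.orthogonalProjectionOnto Psub l₃ : EuclideanSpace ℝ (Fin (r + 1))) - l₃‖ ^ 2)
    (a₀ a₁ a₂ : ℝ)
    (ha₁ : a₀ + a₁ * t₁ + a₂ * t₁ ^ 2 = d₁)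
    (ha₂ : a₀ + a₁ * t₂ + a₂ * t₂ ^ 2 = d₂)
    (ha₃ : a₀ + a₁ * t₃ + a₂ * t₃ ^ 2 = d₃) :
    a₂ = ‖w₁‖ ^ 2 ∧ 0 < a₂ ∧
    ∀ (tpred : ℝ) (lpred : EuclideanSpace ℝ (Fin (r + 1))), lpred = WithLp.toLp 2 (Fin.cons tpred l' : Fin (r + 1) → ℝ) →
      ((∃ p₀ ∈ Psub, dist lpred p₀ = setDist L ↑Psub) ↔ tpred = -a₁ / (2 * a₂)) := by
  classical
  have hG : IsUnit (Pᵀ * P) := gramUnit P hP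
  have hproj : ∀ x : EuclideanSpace ℝ (Fin (r + 1)),
      (Submodule.orthogonalProjectionOnto Psub x : EuclideanSpace ℝ (Fin (r + 1)))
        = WithLp.toLp 2 ((P * (Pᵀ * P)⁻¹ * Pᵀ).mulVec x.ofLp) := fun x => projEq P hG Psub hPsub x
  have hres : ∀ x : EuclideanSpace ℝ (Fin (r + 1)),
      (Submodule.orthogonalProjectionOnto Psub x : EuclideanSpace ℝ (Fin (r + 1))) - x
        = (WithLp.toLp 2 (W.mulVec x.ofLp) : EuclideanSpace ℝ (Fin (r + 1))) := by
    intro x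
    rw [hproj x, hW]
    ext i
    rw [PiLp.sub_apply]
    simp only [Matrix.sub_mulVec, Matrix.one_mulVec]
    rfl
  set lv : ℝ → EuclideanSpace ℝ (Fin (r + 1)) := fun t => WithLp.toLp 2 (Fin.cons t l' : Fin (r + 1) → ℝ) with hlv
  set c : EuclideanSpace ℝ (Fin (r + 1)) := (WithLp.toLp 2 (W.mulVec (lv 0).ofLp) : EuclideanSpace ℝ (Fin (r + 1)))
    with hc
  have hlin : ∀ t : ℝ,
      (WithLp.toLp 2 (W.mulVec (lv t).ofLp) : EuclideanSpace ℝ (Fin (r + 1))) = t • w₁ + c := by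
    intro t
    ext i
    show (W.mulVec (lv t).ofLp) i = (t • w₁ + c) i
    rw [PiLp.add_apply, PiLp.smul_apply, hc]
    show (∑ j, W i j * (lv t).ofLp j) = t • w₁ i + ∑ j, W i j * (lv 0).ofLp j
    simp only [hlv, WithLp.ofLp_toLp, PiLp.toLp_apply, Fin.sum_univ_succ, Fin.cons_zero, Fin.cons_succ, hw₁, smul_eq_mul]
    ring
  have hquad : ∀ t : ℝ,
      ‖(Submodule.orthogonalProjectionOnto Psub (lv t) : EuclideanSpace ℝ (Fin (r + 1))) - lv t‖ ^ 2
        = ‖w₁‖ ^ 2 * t ^ 2 + (2 * (inner ℝ w₁ c : ℝ)) * t + ‖c‖ ^ 2 := by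
    intro t
    rw [hres, hlin]
    rw [norm_add_sq_real, norm_smul, real_inner_smul_left]
    simp only [Real.norm_eq_abs, mul_pow, sq_abs]
    ring
  have hApos : 0 < ‖w₁‖ ^ 2 := pow_pos (norm_pos_iff.mpr hw) 2
  have hl₁' : l₁ = lv t₁ := hl₁
  have hl₂' : l₂ = lv t₂ := hl₂
  have hl₃' : l₃ = lv t₃ := hl₃
  obtain ⟨hA2, hB2, hC2⟩ := quadCoeff ht12 ht13 ht23
    (by rw [ha₁, hd₁, hl₁', hquad t₁])
    (by rw [ha₂, hd₂, hl₂', hquad t₂])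
    (by rw [ha₃, hd₃, hl₃', hquad t₃])
  have ha₂pos : 0 < a₂ := hA2 ▸ hApos
  have ha₂ne : a₂ ≠ 0 := ne_of_gt ha₂pos
  refine ⟨hA2, ha₂pos, ?_⟩
  set f : ℝ → ℝ := fun t =>
    ‖(Submodule.orthogonalProjectionOnto Psub (lv t) : EuclideanSpace ℝ (Fin (r + 1))) - lv t‖ ^ 2 with hf
  have hfq : ∀ t, f t = a₂ * t ^ 2 + a₁ * t + a₀ := by
    intro t
    rw [hf]
    simp only
    rw [hquad t, hA2, hB2, hC2]
  set ts : ℝ := -a₁ / (2 * a₂) with hts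
  have hdiff : ∀ t, f t - f ts = a₂ * (t - ts) ^ 2 := by
    intro t; rw [hfq, hfq, hts]; field_simp; ring
  have hmono : ∀ t, f ts ≤ f t := by
    intro t
    nlinarith [hdiff t, mul_nonneg (le_of_lt ha₂pos) (sq_nonneg (t - ts))]
  have hfnn : ∀ t, 0 ≤ f t := fun t => by rw [hf]; exact sq_nonneg _
  have hsqrt : ∀ t, Real.sqrt (f t)
      = ‖(Submodule.orthogonalProjectionOnto Psub (lv t) : EuclideanSpace ℝ (Fin (r + 1))) - lv t‖ := by
    intro t; rw [hf]; exact Real.sqrt_sq (norm_nonneg _)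
  have hmin : ∀ (y : EuclideanSpace ℝ (Fin (r + 1))), ∀ p ∈ Psub,
      ‖y - (Submodule.orthogonalProjectionOnto Psub y : EuclideanSpace ℝ (Fin (r + 1)))‖ ≤ ‖y - p‖ := by
    intro y p hp
    rw [← Submodule.starProjection_apply, Submodule.starProjection_minimal]
    exact ciInf_le ⟨0, by rintro z ⟨x, rfl⟩; exact norm_nonneg _⟩ (⟨p, hp⟩ : Psub)
  have hmemL : ∀ t : ℝ, lv t ∈ L := by
    intro t; rw [hL]; exact ⟨t, rfl⟩
  set ps : EuclideanSpace ℝ (Fin (r + 1)) :=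
    (Submodule.orthogonalProjectionOnto Psub (lv ts) : EuclideanSpace ℝ (Fin (r + 1))) with hps
  have hpsmem : ps ∈ Psub := Submodule.coe_mem _
  have hlower : ∀ z ∈ Set.image2 dist L (↑Psub : Set (EuclideanSpace ℝ (Fin (r + 1)))),
      Real.sqrt (f ts) ≤ z := by
    rintro z ⟨l, hl, p, hp, rfl⟩
    rw [hL] at hl
    obtain ⟨t, ht⟩ := hl
    have hteq : l = lv t := ht
    subst hteq
    calc Real.sqrt (f ts) ≤ Real.sqrt (f t) := Real.sqrt_le_sqrt (hmono t)
      _ = ‖(Submodule.orthogonalProjectionOnto Psub (lv t) : EuclideanSpace ℝ (Fin (r + 1))) - lv t‖ :=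
          hsqrt t
      _ = ‖lv t - (Submodule.orthogonalProjectionOnto Psub (lv t) : EuclideanSpace ℝ (Fin (r + 1)))‖ :=
          (norm_sub_rev _ _)
      _ ≤ ‖lv t - p‖ := hmin _ p hp
      _ = dist (lv t) p := (dist_eq_norm _ _).symm
  have hdps : dist (lv ts) ps = Real.sqrt (f ts) := by
    rw [dist_eq_norm, ← norm_sub_rev, hsqrt ts]
  have hsd : setDist L (↑Psub : Set (EuclideanSpace ℝ (Fin (r + 1)))) = Real.sqrt (f ts) := by
    refine le_antisymm ?_ (le_csInf ⟨_, Set.mem_image2_of_mem (hmemL ts) hpsmem⟩ hlower)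
    rw [← hdps]
    exact csInf_le ⟨0, by rintro z ⟨l, _, p, _, rfl⟩; exact dist_nonneg⟩
      (Set.mem_image2_of_mem (hmemL ts) hpsmem)
  intro tpred lpred hlpred
  have hlpred' : lpred = lv tpred := hlpred
  constructor
  · rintro ⟨p₀, hp₀, heq⟩
    have h1 : Real.sqrt (f tpred) ≤ dist lpred p₀ := by
      rw [dist_eq_norm, hlpred', hsqrt tpred, norm_sub_rev]
      exact hmin _ p₀ hp₀
    rw [heq, hsd] at h1
    have h2 : f tpred ≤ f ts := by
      nlinarith [Real.sq_sqrt (hfnn tpred), Real.sq_sqrt (hfnn ts),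
        Real.sqrt_nonneg (f tpred), Real.sqrt_nonneg (f ts)]
    have h3 : f tpred = f ts := le_antisymm h2 (hmono tpred)
    have h4 : a₂ * (tpred - ts) ^ 2 = 0 := by rw [← hdiff tpred, h3, sub_self]
    have h5 : (tpred - ts) ^ 2 = 0 := by
      rcases mul_eq_zero.mp h4 with h | h
      · exact absurd h ha₂ne
      · exact h
    have h6 := pow_eq_zero_iff (n := 2) (by norm_num) |>.mp h5
    have := sub_eq_zero.mp h6
    rw [this, hts]
  · intro htp
    refine ⟨ps, hpsmem, ?_⟩
    rw [hlpred', hsd, htp]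
    exact hdps
end

section
/- Let W_k ≠ 0. Then for l_pred = (t_pred, l')ᵀ ∈ ℒ the following are equivalent: (i) there exists p₀ ∈ 𝒫 with d(l_pred, p₀) = min_{l∈ℒ, p∈𝒫} d(l,p); (ii) W_k t_pred = −proj_{⟨W_k⟩}(W' l'), where ⟨W_k⟩ is the column space of W_k and proj_{⟨W_k⟩} is the orthogonal projection onto it. Moreover at least one such t_pred ∈ ℝ^k exists. -/
open Matrix

/-- Identity map forcing the `EuclideanSpace` type. -/
def toE {m : ℕ} (x : Fin m → ℝ) : EuclideanSpace ℝ (Fin m) := WithLp.toLp 2 x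

open RealInnerProductSpace in
lemma aux_pyth {F : Type*} [NormedAddCommGroup F] [InnerProductSpace ℝ F]
    {a b : F} (h : ⟪a, b⟫ = 0) :
    ‖b‖ ≤ ‖a + b‖ ∧ (‖a + b‖ = ‖b‖ ↔ a = 0) := by
  have hsq : ‖a + b‖ ^ 2 = ‖a‖ ^ 2 + ‖b‖ ^ 2 := by
    rw [norm_add_sq_real, h]; ring
  have h1 : ‖b‖ ≤ ‖a + b‖ := by
    nlinarith [norm_nonneg (a + b), norm_nonneg b, sq_nonneg ‖a‖]
  refine ⟨h1, fun he => ?_, fun he => by simp [he]⟩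
  have ha2 : ‖a‖ ^ 2 = 0 := by rw [he] at hsq; linarith
  exact norm_eq_zero.mp (pow_eq_zero_iff (two_ne_zero) |>.mp ha2)

/-- Proposition 4, case 2 (`W_k ≠ 0`): `l_pred = (t_pred, l')ᵀ ∈ ℒ` attains
`d(ℒ,𝒫) = min_{l∈ℒ,p∈𝒫} d(l,p)` (i.e. there is `p₀ ∈ 𝒫` with `d(l_pred,p₀) = d(ℒ,𝒫)`)
iff `W_k t_pred = −proj_{⟨W_k⟩}(W'l')`, where `⟨W_k⟩` is the column space of `W_k`;
moreover at least one such `t_pred ∈ ℝ^k` exists. -/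
theorem stmt_7 {k r n : ℕ} (hk : 1 ≤ k) (hr : 1 ≤ r)
    (P : Matrix (Fin (k + r)) (Fin n) ℝ)
    (hP : LinearIndependent ℝ (fun j : Fin n => (WithLp.toLp 2 (Pᵀ j) : EuclideanSpace ℝ (Fin (k + r)))))
    (Psub : Submodule ℝ (EuclideanSpace ℝ (Fin (k + r))))
    (hPsub : Psub = Submodule.span ℝ
      (Set.range fun j : Fin n => (WithLp.toLp 2 (Pᵀ j) : EuclideanSpace ℝ (Fin (k + r)))))
    (W : Matrix (Fin (k + r)) (Fin (k + r)) ℝ)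
    (hW : W = P * (Pᵀ * P)⁻¹ * Pᵀ - 1)
    (Wk : Matrix (Fin (k + r)) (Fin k) ℝ) (hWk : Wk = fun i j => W i (Fin.castAdd r j))
    (W' : Matrix (Fin (k + r)) (Fin r) ℝ) (hW' : W' = fun i j => W i (Fin.natAdd k j))
    (WkSpan : Submodule ℝ (EuclideanSpace ℝ (Fin (k + r))))
    (hWkSpan : WkSpan = Submodule.span ℝ
      (Set.range fun j : Fin k => (WithLp.toLp 2 (Wkᵀ j) : EuclideanSpace ℝ (Fin (k + r)))))
    (l' : Fin r → ℝ)
    (L : Set (EuclideanSpace ℝ (Fin (k + r))))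
    (hL : L = {x : EuclideanSpace ℝ (Fin (k + r)) | ∃ t : Fin k → ℝ, x = Fin.append t l'})
    (hWk0 : Wk ≠ 0) :
    (∀ (tpred : Fin k → ℝ) (lpred : EuclideanSpace ℝ (Fin (k + r))),
      lpred = Fin.append tpred l' →
      ((∃ p₀ ∈ Psub, dist lpred p₀ = setDist L ↑Psub) ↔
        (WithLp.toLp 2 (Wk.mulVec tpred) : EuclideanSpace ℝ (Fin (k + r))) =
          -(Submodule.orthogonalProjectionOnto WkSpan (WithLp.toLp 2 (W'.mulVec l') : EuclideanSpace ℝ (Fin (k + r))) :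
            EuclideanSpace ℝ (Fin (k + r))))) ∧
    ∃ tpred : Fin k → ℝ,
      (WithLp.toLp 2 (Wk.mulVec tpred) : EuclideanSpace ℝ (Fin (k + r))) =
        -(Submodule.orthogonalProjectionOnto WkSpan (WithLp.toLp 2 (W'.mulVec l') : EuclideanSpace ℝ (Fin (k + r))) :
          EuclideanSpace ℝ (Fin (k + r))) := by
  classical
  -- invertibility of the Gram matrix
  have hPinj : Function.Injective P.mulVec := Matrix.mulVec_injective_iff.mpr
    (hP.map' (WithLp.linearEquiv 2 ℝ _).toLinearMap (LinearEquiv.ker _))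
  have hginj : Function.Injective ((Pᵀ * P).mulVecLin) := by
    rw [← LinearMap.ker_eq_bot, Matrix.ker_mulVecLin_transpose_mul_self, LinearMap.ker_eq_bot]
    exact hPinj
  have hdetG : IsUnit (Pᵀ * P).det := by
    rw [← Matrix.isUnit_iff_isUnit_det, ← Matrix.mulVec_injective_iff_isUnit]
    exact hginj
  have hGinv : (Pᵀ * P) * (Pᵀ * P)⁻¹ = 1 := Matrix.mul_nonsing_inv _ hdetG
  have hPtQ : Pᵀ * (P * (Pᵀ * P)⁻¹ * Pᵀ) = Pᵀ := by
    rw [← Matrix.mul_assoc, ← Matrix.mul_assoc, hGinv, Matrix.one_mul]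
  have hWperp : ∀ x : EuclideanSpace ℝ (Fin (k + r)), Pᵀ *ᵥ (W *ᵥ x) = 0 := by
    intro x
    rw [Matrix.mulVec_mulVec, hW, Matrix.mul_sub, hPtQ, Matrix.mul_one, sub_self,
      Matrix.zero_mulVec]
  have hPsub' : Psub = (LinearMap.range P.mulVecLin).map
      ((EuclideanSpace.equiv (Fin (k + r)) ℝ).symm.toLinearEquiv.toLinearMap) := by
    rw [hPsub, Matrix.range_mulVecLin, Submodule.map_span, ← Set.range_comp]; rfl
  have hWkrange : WkSpan = (LinearMap.range Wk.mulVecLin).map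
      ((EuclideanSpace.equiv (Fin (k + r)) ℝ).symm.toLinearEquiv.toLinearMap) := by
    rw [hWkSpan, Matrix.range_mulVecLin, Submodule.map_span, ← Set.range_comp]; rfl
  -- orthogonality of W x to Psub
  have hxW : ∀ (x : EuclideanSpace ℝ (Fin (k + r))), ∀ p ∈ Psub,
      (inner ℝ (toE (W *ᵥ x)) p) = 0 := by
    intro x p hp
    rw [hPsub'] at hp
    obtain ⟨_, ⟨y, rfl⟩, rfl⟩ := hp
    have h1 : (inner ℝ (toE (W *ᵥ x)) (toE (P *ᵥ y))) = (W *ᵥ x) ⬝ᵥ (P *ᵥ y) := by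
      simp [PiLp.inner_apply, RCLike.inner_apply, dotProduct, toE, mul_comm]
    show inner ℝ (toE (W *ᵥ x)) (toE (P *ᵥ y)) = 0
    rw [h1, Matrix.dotProduct_mulVec, ← Matrix.mulVec_transpose, hWperp,
      zero_dotProduct]
  -- the foot of the perpendicular from x to Psub
  have hQ : P * (Pᵀ * P)⁻¹ * Pᵀ = W + 1 := by rw [hW, sub_add_cancel]
  have hq_mem : ∀ x : EuclideanSpace ℝ (Fin (k + r)), (toE (W *ᵥ x) + x) ∈ Psub := by
    intro x
    rw [hPsub']
    refine ⟨_, ⟨((Pᵀ * P)⁻¹ * Pᵀ) *ᵥ x, rfl⟩, ?_⟩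
    show toE (P *ᵥ (((Pᵀ * P)⁻¹ * Pᵀ) *ᵥ x)) = _
    rw [Matrix.mulVec_mulVec, ← Matrix.mul_assoc, hQ, Matrix.add_mulVec,
      Matrix.one_mulVec]
    rfl
  -- distance estimates to Psub
  have key1 : ∀ (x : EuclideanSpace ℝ (Fin (k + r))), ∀ p ∈ Psub,
      ‖toE (W *ᵥ x)‖ ≤ dist x p := by
    intro x p hp
    have ha : (toE (W *ᵥ x) + x) - p ∈ Psub := Psub.sub_mem (hq_mem x) hp
    have hinner : (inner ℝ ((toE (W *ᵥ x) + x) - p) (-(toE (W *ᵥ x)))) = 0 := by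
      rw [real_inner_comm, inner_neg_left, hxW x _ ha, neg_zero]
    have h := (aux_pyth hinner).1
    have hx : ((toE (W *ᵥ x) + x) - p) + (-(toE (W *ᵥ x))) = x - p := by abel
    rw [hx, norm_neg] at h
    rwa [dist_eq_norm]
  have key2 : ∀ (x : EuclideanSpace ℝ (Fin (k + r))),
      dist x (toE (W *ᵥ x) + x) = ‖toE (W *ᵥ x)‖ := by
    intro x
    rw [dist_eq_norm]
    have : x - (toE (W *ᵥ x) + x) = -(toE (W *ᵥ x)) := by abel
    rw [this, norm_neg]
  -- block decomposition
  have hblock : ∀ t : Fin k → ℝ, W *ᵥ (Fin.append t l') = Wk *ᵥ t + W' *ᵥ l' := by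
    intro t
    funext i
    simp only [Matrix.mulVec, dotProduct, Pi.add_apply, hWk, hW']
    rw [Fin.sum_univ_add]
    simp [Fin.append_left, Fin.append_right]
  set v : EuclideanSpace ℝ (Fin (k + r)) := toE (W' *ᵥ l') with hv
  set u : EuclideanSpace ℝ (Fin (k + r)) :=
    (Submodule.orthogonalProjectionOnto WkSpan v : EuclideanSpace ℝ (Fin (k + r))) with hu
  have hu_mem : u ∈ WkSpan := (Submodule.orthogonalProjectionOnto WkSpan v).2
  have hperp : v - u ∈ WkSpanᗮ := by
    have := Submodule.sub_starProjection_mem_orthogonal (K := WkSpan) v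
    rwa [Submodule.starProjection_apply] at this
  have hmin : ∀ t : Fin k → ℝ,
      ‖v - u‖ ≤ ‖toE (Wk *ᵥ t) + v‖ ∧
        (‖toE (Wk *ᵥ t) + v‖ = ‖v - u‖ ↔ toE (Wk *ᵥ t) + u = 0) := by
    intro t
    have hmem : toE (Wk *ᵥ t) + u ∈ WkSpan := by
      refine WkSpan.add_mem ?_ hu_mem
      rw [hWkrange]; exact ⟨_, ⟨t, rfl⟩, rfl⟩
    have hinner : (inner ℝ (toE (Wk *ᵥ t) + u) (v - u)) = 0 :=
      (Submodule.mem_orthogonal _ _).mp hperp _ hmem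
    have h := aux_pyth hinner
    have hx : (toE (Wk *ᵥ t) + u) + (v - u) = toE (Wk *ᵥ t) + v := by abel
    rwa [hx] at h
  obtain ⟨t₀, ht₀⟩ : ∃ t : Fin k → ℝ, toE (Wk *ᵥ t) = -u := by
    have h1 : -u ∈ WkSpan := WkSpan.neg_mem hu_mem
    rw [hWkrange] at h1
    obtain ⟨_, ⟨t, rfl⟩, ht⟩ := h1
    exact ⟨t, ht⟩
  have hval : ∀ t : Fin k → ℝ, toE (Wk *ᵥ t) = -u → ‖toE (Wk *ᵥ t) + v‖ = ‖v - u‖ := by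
    intro t ht
    rw [ht, neg_add_eq_sub]
  have hWblock : ∀ t : Fin k → ℝ,
      toE (W *ᵥ toE (Fin.append t l')) = toE (Wk *ᵥ t) + v := by
    intro t
    show toE (W *ᵥ (Fin.append t l')) = toE (Wk *ᵥ t + W' *ᵥ l')
    rw [hblock]
  -- the set distance
  have hsd : setDist L ↑Psub = ‖v - u‖ := by
    apply IsLeast.csInf_eq
    constructor
    · refine Set.mem_image2.mpr ⟨toE (Fin.append t₀ l'), ?_,
        toE (W *ᵥ toE (Fin.append t₀ l')) + toE (Fin.append t₀ l'), hq_mem _, ?_⟩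
      · rw [hL]; exact ⟨t₀, rfl⟩
      · rw [key2, hWblock]
        exact hval t₀ ht₀
    · rintro d ⟨l, hl, p, hp, rfl⟩
      rw [hL] at hl
      obtain ⟨t, ht⟩ := hl
      obtain rfl : l = toE (Fin.append t l') := by rw [← ht]; rfl
      calc ‖v - u‖ ≤ ‖toE (Wk *ᵥ t) + v‖ := (hmin t).1
        _ = ‖toE (W *ᵥ toE (Fin.append t l'))‖ := by rw [hWblock]
        _ ≤ dist (toE (Fin.append t l')) p := key1 _ p hp
  constructor
  · intro tpred lpred hlpred
    obtain rfl : lpred = toE (Fin.append tpred l') := by rw [← hlpred]; rfl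
    constructor
    · rintro ⟨p₀, hp₀, hd⟩
      have h1 : ‖v - u‖ ≤ ‖toE (Wk *ᵥ tpred) + v‖ := (hmin tpred).1
      have h3 := key1 (toE (Fin.append tpred l')) p₀ hp₀
      rw [hWblock] at h3
      have h2 : ‖toE (Wk *ᵥ tpred) + v‖ ≤ ‖v - u‖ := by
        calc ‖toE (Wk *ᵥ tpred) + v‖ ≤ dist (toE (Fin.append tpred l')) p₀ := h3
          _ = setDist L ↑Psub := hd
          _ = ‖v - u‖ := hsd
      have heq : ‖toE (Wk *ᵥ tpred) + v‖ = ‖v - u‖ := le_antisymm h2 h1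
      exact eq_neg_of_add_eq_zero_left ((hmin tpred).2.mp heq)
    · intro h
      refine ⟨toE (W *ᵥ toE (Fin.append tpred l')) + toE (Fin.append tpred l'),
        hq_mem _, ?_⟩
      have h4 := key2 (toE (Fin.append tpred l'))
      rw [hsd]
      exact h4.trans (by rw [hWblock]; exact hval tpred h)
  · exact ⟨t₀, ht₀⟩
end
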